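/- For every n ≥ 1, Σ_{m=n+1}^{∞} (-A_m^{(n)}) = 2^{-2n}·C(2n,n) - 1/(n+1), where A_m^{(n)} are the Taylor coefficients of V_n at 0. -/

import Mathlib

noncomputable def V (x : ℝ) : ℕ → ℝ
  | 0 => 1
  | n + 1 => (1 - x + V x n) / (1 + V x n)

open Finset Filter Polynomial

/-- Taylor coefficients of `√(1-x)`. -/
noncomputable def lam : ℕ → ℝ
  | 0 => 1
  | m + 1 => -2 * catalan m / 4 ^ (m + 1)

lemma lam_zero : lam 0 = 1 := rfl

lemma lam_succ (m : ℕ) : lam (m + 1) = -2 * catalan m / 4 ^ (m + 1) := rfl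

lemma lam_conv (m : ℕ) : ∑ j ∈ range (m + 1), lam j * lam (m - j)
    = if m = 0 then 1 else if m = 1 then (-1 : ℝ) else 0 := by
  match m with
  | 0 => simp [lam_zero]
  | 1 => norm_num [Finset.sum_range_succ, lam_zero, lam_succ]
  | (k+2) =>
    have hcat : (∑ i ∈ range (k + 1), (catalan i : ℝ) * catalan (k - i)) = catalan (k + 1) := by
      have hc : ∑ i ∈ range (k + 1), catalan i * catalan (k - i) = catalan (k + 1) := by
        rw [catalan_succ',
          Nat.sum_antidiagonal_eq_sum_range_succ (fun x y => catalan x * catalan y)]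
      exact_mod_cast congrArg (Nat.cast (R := ℝ)) hc
    have hmid : ∀ i ∈ range (k + 1),
        lam (i + 1) * lam (k + 2 - (i + 1)) = (catalan i : ℝ) * catalan (k - i) * (4 / 4 ^ (k + 2)) := by
      intro i hi
      have hik : i ≤ k := by simpa [Nat.lt_succ_iff] using hi
      have h1 : k + 2 - (i + 1) = (k - i) + 1 := by omega
      rw [h1, lam_succ, lam_succ]
      have h4 : (4 : ℝ) ^ (i + 1) * 4 ^ (k - i + 1) = 4 ^ (k + 2) := by
        rw [← pow_add]; congr 1; omega
      rw [div_mul_div_comm, h4]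
      ring
    rw [Finset.sum_range_succ' (fun j => lam j * lam (k + 2 - j)) (k + 2)]
    rw [Finset.sum_range_succ]
    rw [Finset.sum_congr rfl hmid]
    rw [← Finset.sum_mul, hcat]
    simp only [Nat.sub_self, Nat.sub_zero, lam_zero, lam_succ]
    rw [show (if k + 2 = 0 then (1:ℝ) else if k + 2 = 1 then -1 else 0) = 0 by rw [if_neg (by omega), if_neg (by omega)]]
    have h40 : (4 : ℝ) ^ (k + 2) ≠ 0 := by positivity
    field_simp
    ring

lemma lam_sum (n : ℕ) : ∑ m ∈ range (n + 1), lam m = (Nat.centralBinom n : ℝ) / 4 ^ n := by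
  induction n with
  | zero => simp [lam_zero, Nat.centralBinom]
  | succ k ih =>
    rw [Finset.sum_range_succ, ih, lam_succ]
    have hk1 : ((k : ℝ) + 1) ≠ 0 := by positivity
    have h1 : ((k : ℝ) + 1) * Nat.centralBinom (k + 1) = 2 * (2 * k + 1) * Nat.centralBinom k := by
      exact_mod_cast Nat.succ_mul_centralBinom_succ k
    have h2 : ((k : ℝ) + 1) * catalan k = Nat.centralBinom k := by
      exact_mod_cast succ_mul_catalan_eq_centralBinom k
    have h3 : (Nat.centralBinom (k + 1) : ℝ) = 4 * Nat.centralBinom k - 2 * catalan k := by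
      apply mul_left_cancel₀ hk1
      rw [h1]; linear_combination 2 * h2
    rw [h3]
    have h40 : (4 : ℝ) ^ (k + 1) ≠ 0 := by positivity
    have h40' : (4 : ℝ) ^ k ≠ 0 := by positivity
    field_simp
    ring

lemma V_one : ∀ n : ℕ, V 1 n = 1 / (n + 1) := by
  intro n
  induction n with
  | zero => simp [V]
  | succ k ih =>
    show (1 - 1 + V 1 k) / (1 + V 1 k) = 1 / ((((k + 1) : ℕ) : ℝ) + 1)
    rw [ih]
    have hk1 : ((k : ℝ) + 1) ≠ 0 := by positivity
    have hk2 : ((k : ℝ) + 1 + 1) ≠ 0 := by positivity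
    push_cast
    field_simp
    ring

lemma V_nonneg : ∀ (n : ℕ) (x : ℝ), |x| ≤ 1 / 2 → 0 ≤ V x n := by
  intro n x hx
  have hx' := abs_le.1 hx
  induction n with
  | zero => norm_num [V]
  | succ k ih =>
    show 0 ≤ (1 - x + V x k) / (1 + V x k)
    apply div_nonneg <;> linarith [hx'.1, hx'.2]

lemma V_sqrt (n : ℕ) (x : ℝ) (hx : |x| ≤ 1 / 2) :
    |V x n - Real.sqrt (1 - x)| ≤ |x| ^ (n + 1) := by
  have hx' := abs_le.1 hx
  have h1x : (0 : ℝ) ≤ 1 - x := by linarith [hx'.2]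
  set y := Real.sqrt (1 - x) with hy
  have hy2 : y * y = 1 - x := Real.mul_self_sqrt h1x
  have hy0 : 0 ≤ y := Real.sqrt_nonneg _
  have h1y : |1 - y| ≤ |x| := by
    have hprod : (1 - y) * (1 + y) = x := by linear_combination -hy2
    have h1py : (1 : ℝ) ≤ 1 + y := by linarith
    calc |1 - y| = |1 - y| * 1 := (mul_one _).symm
      _ ≤ |1 - y| * (1 + y) := mul_le_mul_of_nonneg_left h1py (abs_nonneg _)
      _ = |(1 - y) * (1 + y)| := by rw [abs_mul, abs_of_nonneg (by linarith : (0:ℝ) ≤ 1 + y)]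
      _ = |x| := by rw [hprod]
  induction n with
  | zero =>
    show |V x 0 - y| ≤ |x| ^ 1
    simpa [V] using h1y
  | succ k ih =>
    have hV0 := V_nonneg k x hx
    have h1V : (1 : ℝ) ≤ 1 + V x k := by linarith
    have h1Vne : (1 : ℝ) + V x k ≠ 0 := by linarith
    have key : V x (k + 1) - y = (1 - y) * (V x k - y) / (1 + V x k) := by
      show (1 - x + V x k) / (1 + V x k) - y = _
      rw [div_sub' h1Vne]
      congr 1
      linear_combination -hy2
    calc |V x (k + 1) - y| = |1 - y| * |V x k - y| / (1 + V x k) := by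
          rw [key, abs_div, abs_mul, abs_of_nonneg (by linarith : (0:ℝ) ≤ 1 + V x k)]
      _ ≤ |x| * |x| ^ (k + 1) / 1 := by gcongr
      _ = |x| ^ (k + 2) := by rw [div_one, ← pow_succ']

/-- The truncated series as a polynomial. -/
noncomputable def Sp (n : ℕ) : Polynomial ℝ := ∑ m ∈ range (n + 1), Polynomial.C (lam m) * Polynomial.X ^ m

lemma Sp_coeff (n k : ℕ) : (Sp n).coeff k = if k ≤ n then lam k else 0 := by
  rw [Sp, Polynomial.finset_sum_coeff]
  simp only [Polynomial.coeff_C_mul, Polynomial.coeff_X_pow, mul_ite, mul_one, mul_zero]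
  rw [Finset.sum_ite_eq (range (n + 1)) k lam]
  simp [Nat.lt_succ_iff]

lemma Sp_eval (n : ℕ) (x : ℝ) : (Sp n).eval x = ∑ m ∈ range (n + 1), lam m * x ^ m := by
  simp [Sp, Polynomial.eval_finset_sum]

lemma Sq_coeff (n m : ℕ) (hm : m ≤ n) :
    (Sp n * Sp n - (1 - Polynomial.X)).coeff m = 0 := by
  rw [Polynomial.coeff_sub, Polynomial.coeff_mul,
    Finset.Nat.sum_antidiagonal_eq_sum_range_succ_mk]
  have hcg : ∀ j ∈ range (m + 1),
      (Sp n).coeff j * (Sp n).coeff (m - j) = lam j * lam (m - j) := by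
    intro j hj
    have hjm : j ≤ m := by simpa [Nat.lt_succ_iff] using hj
    rw [Sp_coeff, Sp_coeff, if_pos (le_trans hjm hm), if_pos (le_trans (Nat.sub_le m j) hm)]
  rw [Finset.sum_congr rfl hcg, lam_conv]
  match m with
  | 0 => simp
  | 1 => norm_num [Polynomial.coeff_one, Polynomial.coeff_X]
  | (k+2) =>
    have h1 : ¬(k + 2 = 0) := by omega
    have h2 : ¬(k + 2 = 1) := by omega
    simp [h1, h2, Polynomial.coeff_one, Polynomial.coeff_X]

lemma poly_small (p : Polynomial ℝ) (k : ℕ) (h : ∀ m ≤ k, p.coeff m = 0) (x : ℝ)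
    (hx : |x| ≤ 1) :
    |p.eval x| ≤ (∑ m ∈ range (p.natDegree + 1), |p.coeff m|) * |x| ^ (k + 1) := by
  rw [Polynomial.eval_eq_sum_range]
  calc |∑ m ∈ range (p.natDegree + 1), p.coeff m * x ^ m|
      ≤ ∑ m ∈ range (p.natDegree + 1), |p.coeff m * x ^ m| :=
        Finset.abs_sum_le_sum_abs _ _
    _ ≤ ∑ m ∈ range (p.natDegree + 1), |p.coeff m| * |x| ^ (k + 1) := by
        apply Finset.sum_le_sum
        intro m _
        rw [abs_mul, abs_pow]
        rcases le_or_gt m k with hmk | hmk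
        · simp [h m hmk]
        · exact mul_le_mul_of_nonneg_left
            (pow_le_pow_of_le_one (abs_nonneg x) hx (by omega)) (abs_nonneg _)
    _ = _ := by rw [← Finset.sum_mul]

lemma head_zero (n : ℕ) (d : ℕ → ℝ) (Cst δ : ℝ) (hδ : 0 < δ)
    (h : ∀ x : ℝ, 0 < |x| → |x| ≤ δ → |∑ m ∈ range (n + 1), d m * x ^ m| ≤ Cst * |x| ^ (n + 1)) :
    d 0 = 0 := by
  set B := ∑ m ∈ range (n + 1), |d m| with hB
  have hB0 : 0 ≤ B := Finset.sum_nonneg fun _ _ => abs_nonneg _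
  set δ' := min δ 1 with hδ'def
  have hδ' : 0 < δ' := lt_min hδ one_pos
  have hbound : ∀ x : ℝ, 0 < |x| → |x| ≤ δ' → |d 0| ≤ (|Cst| + B) * |x| := by
    intro x hx0 hx
    have hx1 : |x| ≤ 1 := le_trans hx (min_le_right _ _)
    have hxδ : |x| ≤ δ := le_trans hx (min_le_left _ _)
    have h1 := h x hx0 hxδ
    have hsplit : d 0 = (∑ m ∈ range (n + 1), d m * x ^ m)
        - x * ∑ m ∈ range n, d (m + 1) * x ^ m := by
      rw [Finset.mul_sum, Finset.sum_range_succ' (fun m => d m * x ^ m) n]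
      simp only [pow_zero, mul_one]
      have he : ∑ i ∈ range n, d (i + 1) * x ^ (i + 1)
          = ∑ m ∈ range n, x * (d (m + 1) * x ^ m) :=
        Finset.sum_congr rfl fun i _ => by ring
      rw [he]; ring
    have hsum_le : |∑ m ∈ range n, d (m + 1) * x ^ m| ≤ B := by
      calc |∑ m ∈ range n, d (m + 1) * x ^ m| ≤ ∑ m ∈ range n, |d (m + 1) * x ^ m| :=
            Finset.abs_sum_le_sum_abs _ _
        _ ≤ ∑ m ∈ range n, |d (m + 1)| := by
            apply Finset.sum_le_sum
            intro m _
            rw [abs_mul, abs_pow]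
            calc |d (m + 1)| * |x| ^ m ≤ |d (m + 1)| * 1 :=
                  mul_le_mul_of_nonneg_left (pow_le_one₀ (abs_nonneg x) hx1) (abs_nonneg _)
              _ = |d (m + 1)| := mul_one _
        _ ≤ B := by
            rw [hB, Finset.sum_range_succ' (fun m => |d m|) n]
            have := abs_nonneg (d 0)
            linarith
    have h2 : |x * ∑ m ∈ range n, d (m + 1) * x ^ m| ≤ B * |x| := by
      rw [abs_mul]
      calc |x| * |∑ m ∈ range n, d (m + 1) * x ^ m| ≤ |x| * B :=
            mul_le_mul_of_nonneg_left hsum_le (abs_nonneg x)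
        _ = B * |x| := mul_comm _ _
    have h3 : Cst * |x| ^ (n + 1) ≤ |Cst| * |x| := by
      calc Cst * |x| ^ (n + 1) ≤ |Cst * |x| ^ (n + 1)| := le_abs_self _
        _ = |Cst| * |x| ^ (n + 1) := by rw [abs_mul, abs_pow, abs_abs]
        _ ≤ |Cst| * |x| ^ 1 :=
            mul_le_mul_of_nonneg_left
              (pow_le_pow_of_le_one (abs_nonneg x) hx1 (by omega)) (abs_nonneg _)
        _ = |Cst| * |x| := by rw [pow_one]
    calc |d 0| ≤ |∑ m ∈ range (n + 1), d m * x ^ m|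
          + |x * ∑ m ∈ range n, d (m + 1) * x ^ m| := by
          rw [hsplit]; exact abs_sub _ _
      _ ≤ Cst * |x| ^ (n + 1) + B * |x| := add_le_add h1 h2
      _ ≤ |Cst| * |x| + B * |x| := by linarith
      _ = (|Cst| + B) * |x| := by ring
  have key : ∀ k : ℕ, |d 0| ≤ (|Cst| + B) * (δ' / (k + 1)) := by
    intro k
    have hk1 : (1 : ℝ) ≤ (k : ℝ) + 1 := by
      have : (0 : ℝ) ≤ (k : ℝ) := Nat.cast_nonneg k
      linarith
    have hxpos : (0 : ℝ) < δ' / (k + 1) := by positivity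
    have := hbound (δ' / (k + 1)) (by rwa [abs_of_pos hxpos])
      (by rw [abs_of_pos hxpos]; exact div_le_self hδ'.le hk1)
    rwa [abs_of_pos hxpos] at this
  have htend : Tendsto (fun k : ℕ => (|Cst| + B) * (δ' / (k + 1))) atTop (nhds 0) := by
    have h0 : Tendsto (fun k : ℕ => δ' / ((k : ℝ) + 1)) atTop (nhds 0) := by
      have := tendsto_one_div_add_atTop_nhds_zero_nat (𝕜 := ℝ)
      have h1 := this.const_mul δ'
      simpa [mul_one_div, div_eq_mul_inv] using h1
    have h1 := h0.const_mul (|Cst| + B)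
    simpa using h1
  have hle : |d 0| ≤ 0 := ge_of_tendsto' htend key
  exact abs_nonpos_iff.mp hle

lemma coeffs_zero : ∀ (n : ℕ) (d : ℕ → ℝ) (Cst δ : ℝ), 0 < δ →
    (∀ x : ℝ, 0 < |x| → |x| ≤ δ → |∑ m ∈ range (n + 1), d m * x ^ m| ≤ Cst * |x| ^ (n + 1)) →
    ∀ m ≤ n, d m = 0 := by
  intro n
  induction n with
  | zero =>
    intro d Cst δ hδ h m hm
    obtain rfl : m = 0 := Nat.le_zero.1 hm
    exact head_zero 0 d Cst δ hδ h
  | succ k ih =>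
    intro d Cst δ hδ h m hm
    have hd0 : d 0 = 0 := head_zero (k + 1) d Cst δ hδ h
    have h' : ∀ x : ℝ, 0 < |x| → |x| ≤ δ →
        |∑ m ∈ range (k + 1), d (m + 1) * x ^ m| ≤ Cst * |x| ^ (k + 1) := by
      intro x hx0 hxδ
      have h1 := h x hx0 hxδ
      have hshift : ∑ m ∈ range (k + 2), d m * x ^ m
          = x * ∑ m ∈ range (k + 1), d (m + 1) * x ^ m := by
        rw [Finset.mul_sum, Finset.sum_range_succ' (fun m => d m * x ^ m) (k + 1)]
        simp only [pow_zero, mul_one, hd0, add_zero]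
        exact Finset.sum_congr rfl fun i _ => by ring
      rw [hshift, abs_mul] at h1
      have h2 : |x| * |∑ m ∈ range (k + 1), d (m + 1) * x ^ m|
          ≤ |x| * (Cst * |x| ^ (k + 1)) := by
        calc |x| * |∑ m ∈ range (k + 1), d (m + 1) * x ^ m|
            ≤ Cst * |x| ^ (k + 2) := h1
          _ = |x| * (Cst * |x| ^ (k + 1)) := by ring
      exact le_of_mul_le_mul_left h2 hx0
    match m with
    | 0 => exact hd0
    | (m' + 1) => exact ih (fun j => d (j + 1)) Cst δ hδ h' m' (by omega)

set_option maxHeartbeats 1000000 in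
theorem stmt17 (n : ℕ) (hn : 1 ≤ n) (A : ℕ → ℝ)
    (hA : ∀ x : ℝ, |x| ≤ 1 → HasSum (fun m => A m * x ^ m) (V x n)) :
    HasSum (fun m => -A (m + (n + 1)))
      ((Nat.choose (2 * n) n : ℝ) / 2 ^ (2 * n) - 1 / (n + 1)) := by

  -- Step 1: bound the coefficients
  have hs : Summable (fun m => A m * (1 / 2 : ℝ) ^ m) := (hA (1 / 2) (by rw [abs_of_nonneg (by norm_num : (0:ℝ) ≤ 1/2)]; norm_num)).summable
  have hto : Tendsto (fun m => A m * (1 / 2 : ℝ) ^ m) atTop (nhds 0) := hs.tendsto_atTop_zero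
  obtain ⟨N, hN⟩ := Metric.tendsto_atTop.mp hto 1 one_pos
  set C0 : ℝ := 1 + ∑ m ∈ range N, |A m * (1 / 2 : ℝ) ^ m| with hC0def
  have hsum_nonneg : (0:ℝ) ≤ ∑ m ∈ range N, |A m * (1 / 2 : ℝ) ^ m| :=
    Finset.sum_nonneg fun _ _ => abs_nonneg _
  have hC0nn : (0 : ℝ) ≤ C0 := by rw [hC0def]; linarith
  have hC0 : ∀ m, |A m * (1 / 2 : ℝ) ^ m| ≤ C0 := by
    intro m
    rcases lt_or_ge m N with hmN | hmN
    · have := Finset.single_le_sum (f := fun m => |A m * (1 / 2 : ℝ) ^ m|)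
        (fun i _ => abs_nonneg _) (Finset.mem_range.2 hmN)
      rw [hC0def]; linarith
    · have := hN m hmN
      rw [Real.dist_eq, sub_zero] at this
      rw [hC0def]; linarith
  have hCb : ∀ m, |A m| ≤ C0 * 2 ^ m := by
    intro m
    have hpow : ((1 / 2 : ℝ)) ^ m * 2 ^ m = 1 := by
      rw [div_pow, one_pow, div_mul_cancel₀]
      positivity
    have h1 : |A m| * (1 / 2 : ℝ) ^ m ≤ C0 := by
      have := hC0 m
      rwa [abs_mul, abs_of_pos (by positivity : (0:ℝ) < (1/2:ℝ) ^ m)] at this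
    calc |A m| = |A m| * ((1 / 2 : ℝ) ^ m * 2 ^ m) := by rw [hpow, mul_one]
      _ = (|A m| * (1 / 2 : ℝ) ^ m) * 2 ^ m := by ring
      _ ≤ C0 * 2 ^ m := mul_le_mul_of_nonneg_right h1 (by positivity)
  -- Step 2: tail bound
  have tailb : ∀ x : ℝ, |x| ≤ 1 / 4 →
      |V x n - ∑ m ∈ range (n + 1), A m * x ^ m| ≤ 2 * C0 * 2 ^ (n + 1) * |x| ^ (n + 1) := by
    intro x hx
    have hx1 : |x| ≤ 1 := by linarith
    have hsum := hA x hx1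
    have htail : HasSum (fun m => A (m + (n + 1)) * x ^ (m + (n + 1)))
        (V x n - ∑ i ∈ range (n + 1), A i * x ^ i) := by
      refine (hasSum_nat_add_iff (f := fun m => A m * x ^ m) (n + 1)).2 ?_
      simpa using hsum
    have hgs : Summable (fun m : ℕ => C0 * 2 ^ (n + 1) * |x| ^ (n + 1) * (1 / 2 : ℝ) ^ m) :=
      (summable_geometric_of_lt_one (by norm_num) (by norm_num)).mul_left _
    have hle : ∀ m : ℕ, |A (m + (n + 1)) * x ^ (m + (n + 1))|
        ≤ C0 * 2 ^ (n + 1) * |x| ^ (n + 1) * (1 / 2 : ℝ) ^ m := by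
      intro m
      rw [abs_mul, abs_pow]
      have h2x : 2 * |x| ≤ 1 / 2 := by linarith
      calc |A (m + (n + 1))| * |x| ^ (m + (n + 1))
          ≤ C0 * 2 ^ (m + (n + 1)) * |x| ^ (m + (n + 1)) :=
            mul_le_mul_of_nonneg_right (hCb _) (by positivity)
        _ = C0 * 2 ^ (n + 1) * |x| ^ (n + 1) * (2 * |x|) ^ m := by
            rw [pow_add, pow_add, mul_pow]; ring
        _ ≤ C0 * 2 ^ (n + 1) * |x| ^ (n + 1) * (1 / 2 : ℝ) ^ m := by
            apply mul_le_mul_of_nonneg_left (pow_le_pow_left₀ (by positivity) h2x m)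
            positivity
    have habs : Summable (fun m => |A (m + (n + 1)) * x ^ (m + (n + 1))|) :=
      Summable.of_nonneg_of_le (fun _ => abs_nonneg _) hle hgs
    have e1 : |V x n - ∑ i ∈ range (n + 1), A i * x ^ i|
        = |∑' m, A (m + (n + 1)) * x ^ (m + (n + 1))| := by rw [htail.tsum_eq]
    have e2 : |∑' m, A (m + (n + 1)) * x ^ (m + (n + 1))|
        ≤ ∑' m, |A (m + (n + 1)) * x ^ (m + (n + 1))| := by
      have h := norm_tsum_le_tsum_norm (f := fun m => A (m + (n + 1)) * x ^ (m + (n + 1)))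
        (by simpa only [Real.norm_eq_abs] using habs)
      simpa only [Real.norm_eq_abs] using h
    have e3 : ∑' m, |A (m + (n + 1)) * x ^ (m + (n + 1))|
        ≤ ∑' m : ℕ, C0 * 2 ^ (n + 1) * |x| ^ (n + 1) * (1 / 2 : ℝ) ^ m :=
      Summable.tsum_le_tsum hle habs hgs
    have e4 : ∑' m : ℕ, C0 * 2 ^ (n + 1) * |x| ^ (n + 1) * (1 / 2 : ℝ) ^ m
        = C0 * 2 ^ (n + 1) * |x| ^ (n + 1) * ∑' m : ℕ, (1 / 2 : ℝ) ^ m := tsum_mul_left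
    have e5 : ∑' m : ℕ, (1 / 2 : ℝ) ^ m = 2 := by
      rw [tsum_geometric_of_lt_one (by norm_num) (by norm_num)]; norm_num
    have e6 : ∑' m : ℕ, C0 * 2 ^ (n + 1) * |x| ^ (n + 1) * (1 / 2 : ℝ) ^ m
        = 2 * C0 * 2 ^ (n + 1) * |x| ^ (n + 1) := by rw [e4, e5]; ring
    rw [e6] at e3
    rw [e1]
    linarith
  -- Step 3: A m = lam m for m ≤ n
  set L : ℝ := ∑ m ∈ range (n + 1), |lam m| with hLdef
  have hL0 : 0 ≤ L := Finset.sum_nonneg fun _ _ => abs_nonneg _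
  set q : Polynomial ℝ := Sp n * Sp n - (1 - Polynomial.X) with hq
  set K : ℝ := ∑ m ∈ range (q.natDegree + 1), |q.coeff m| with hK
  set δ : ℝ := min (1 / 4) (1 / (2 * (L + 1))) with hδdef
  have hδ : 0 < δ := lt_min (by norm_num) (by positivity)
  have hmain : ∀ x : ℝ, 0 < |x| → |x| ≤ δ →
      |∑ m ∈ range (n + 1), (A m - lam m) * x ^ m|
        ≤ (2 * C0 * 2 ^ (n + 1) + 1 + K) * |x| ^ (n + 1) := by
    intro x hx0 hxδ
    have hx4 : |x| ≤ 1 / 4 := le_trans hxδ (min_le_left _ _)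
    have hx2 : |x| ≤ 1 / 2 := by linarith
    have hx1 : |x| ≤ 1 := by linarith
    have hxL : |x| ≤ 1 / (2 * (L + 1)) := le_trans hxδ (min_le_right _ _)
    have h1 := tailb x hx4
    have h2 := V_sqrt n x hx2
    have habs := abs_le.1 hx2
    have h1x : (0 : ℝ) ≤ 1 - x := by linarith [habs.2]
    set y := Real.sqrt (1 - x) with hydef
    have hy : 1 / 2 ≤ y := by
      rw [hydef, Real.le_sqrt (by norm_num) h1x]
      nlinarith [habs.2]
    set S := ∑ m ∈ range (n + 1), lam m * x ^ m with hSdef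
    have hSlow : 1 / 2 ≤ S := by
      have hsplitS : S - 1 = x * ∑ m ∈ range n, lam (m + 1) * x ^ m := by
        rw [hSdef, Finset.mul_sum, Finset.sum_range_succ' (fun m => lam m * x ^ m) n]
        simp only [pow_zero, mul_one, lam_zero]
        have he : ∑ i ∈ range n, lam (i + 1) * x ^ (i + 1)
            = ∑ m ∈ range n, x * (lam (m + 1) * x ^ m) :=
          Finset.sum_congr rfl fun i _ => by ring
        rw [he]; ring
      have hsum_le : |∑ m ∈ range n, lam (m + 1) * x ^ m| ≤ L := by
        calc |∑ m ∈ range n, lam (m + 1) * x ^ m|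
            ≤ ∑ m ∈ range n, |lam (m + 1) * x ^ m| := Finset.abs_sum_le_sum_abs _ _
          _ ≤ ∑ m ∈ range n, |lam (m + 1)| := by
              apply Finset.sum_le_sum
              intro m _
              rw [abs_mul, abs_pow]
              calc |lam (m + 1)| * |x| ^ m ≤ |lam (m + 1)| * 1 :=
                    mul_le_mul_of_nonneg_left (pow_le_one₀ (abs_nonneg x) hx1) (abs_nonneg _)
                _ = |lam (m + 1)| := mul_one _
          _ ≤ L := by
              rw [hLdef, Finset.sum_range_succ' (fun m => |lam m|) n]
              have := abs_nonneg (lam 0)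
              linarith
      have hS1 : |S - 1| ≤ L * |x| := by
        rw [hsplitS, abs_mul]
        calc |x| * |∑ m ∈ range n, lam (m + 1) * x ^ m| ≤ |x| * L :=
              mul_le_mul_of_nonneg_left hsum_le (abs_nonneg x)
          _ = L * |x| := mul_comm _ _
      have hLx : L * |x| ≤ 1 / 2 := by
        have h1 : L * |x| ≤ L * (1 / (2 * (L + 1))) :=
          mul_le_mul_of_nonneg_left hxL hL0
        have h2 : L * (1 / (2 * (L + 1))) ≤ 1 / 2 := by
          rw [mul_one_div, div_le_div_iff₀ (by positivity) (by norm_num)]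
          linarith
        linarith
      have := (abs_le.1 hS1).1
      linarith
    have h3 : |y - S| ≤ K * |x| ^ (n + 1) := by
      have hpoly := poly_small q n (fun m hm => by rw [hq]; exact Sq_coeff n m hm) x hx1
      have heval : q.eval x = S * S - (1 - x) := by
        rw [hq]
        simp [Sp_eval, hSdef]
      have hy2 : y * y = 1 - x := Real.mul_self_sqrt h1x
      have hfac : (S - y) * (S + y) = S * S - (1 - x) := by linear_combination -hy2
      have hSy : (1 : ℝ) ≤ S + y := by linarith
      calc |y - S| = |S - y| := abs_sub_comm _ _
        _ = |S - y| * 1 := (mul_one _).symm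
        _ ≤ |S - y| * (S + y) := mul_le_mul_of_nonneg_left hSy (abs_nonneg _)
        _ = |(S - y) * (S + y)| := by rw [abs_mul, abs_of_nonneg (by linarith : (0:ℝ) ≤ S + y)]
        _ = |q.eval x| := by rw [hfac, heval]
        _ ≤ K * |x| ^ (n + 1) := by rw [hK]; exact hpoly
    have hsplit : ∑ m ∈ range (n + 1), (A m - lam m) * x ^ m
        = ((∑ m ∈ range (n + 1), A m * x ^ m) - V x n) + (V x n - y) + (y - S) := by
      have hd : ∑ m ∈ range (n + 1), (A m - lam m) * x ^ m
          = (∑ m ∈ range (n + 1), A m * x ^ m) - ∑ m ∈ range (n + 1), lam m * x ^ m := by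
        rw [← Finset.sum_sub_distrib]
        exact Finset.sum_congr rfl fun i _ => by ring
      rw [hd, hSdef]
      ring
    rw [hsplit]
    have hV' : |(∑ m ∈ range (n + 1), A m * x ^ m) - V x n| ≤ 2 * C0 * 2 ^ (n + 1) * |x| ^ (n + 1) := by
      rw [abs_sub_comm]; exact h1
    calc |((∑ m ∈ range (n + 1), A m * x ^ m) - V x n) + (V x n - y) + (y - S)|
        ≤ |((∑ m ∈ range (n + 1), A m * x ^ m) - V x n) + (V x n - y)| + |y - S| :=
          abs_add_le _ _
      _ ≤ |(∑ m ∈ range (n + 1), A m * x ^ m) - V x n| + |V x n - y| + |y - S| := by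
          have := abs_add_le ((∑ m ∈ range (n + 1), A m * x ^ m) - V x n) (V x n - y)
          linarith
      _ ≤ 2 * C0 * 2 ^ (n + 1) * |x| ^ (n + 1) + |x| ^ (n + 1) + K * |x| ^ (n + 1) := by
          have h2' : |V x n - y| ≤ |x| ^ (n + 1) := h2
          linarith
      _ = (2 * C0 * 2 ^ (n + 1) + 1 + K) * |x| ^ (n + 1) := by ring
  have hAl : ∀ m ≤ n, A m - lam m = 0 :=
    coeffs_zero n (fun m => A m - lam m) _ δ hδ hmain
  -- Step 4: conclude
  have h1 := hA 1 (by norm_num)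
  simp only [one_pow, mul_one] at h1
  have h2 : HasSum (fun m => A (m + (n + 1))) (V 1 n - ∑ i ∈ range (n + 1), A i) := by
    refine (hasSum_nat_add_iff (f := fun m => A m) (n + 1)).2 ?_
    simpa using h1
  have h3 := h2.neg
  have hsumA : ∑ i ∈ range (n + 1), A i = (Nat.centralBinom n : ℝ) / 4 ^ n := by
    have : ∑ i ∈ range (n + 1), A i = ∑ i ∈ range (n + 1), lam i := by
      apply Finset.sum_congr rfl
      intro i hi
      have := hAl i (Nat.lt_succ_iff.1 (Finset.mem_range.1 hi))
      linarith
    rw [this, lam_sum]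
  have hval : ((Nat.choose (2 * n) n : ℝ) / 2 ^ (2 * n) - 1 / (n + 1))
      = -(V 1 n - ∑ i ∈ range (n + 1), A i) := by
    rw [V_one n, hsumA]
    have hcb : (Nat.centralBinom n : ℝ) = (Nat.choose (2 * n) n : ℝ) := rfl
    rw [hcb, pow_mul]
    norm_num
  rw [hval]
  exact h3
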